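/- arXiv:1310.1765 — 2 statements merged into one kernel-verified Lean document; each statement's English description precedes it below -/
import Mathlib

section
/- If L/F is unramified, then v_L(β) = 0 and v(a) = 0. If L/F is ramified, then v_L(β) = v(a) and v(a) ∈ {0, 1}. -/
noncomputable section

abbrev Zm0 : Type := WithZero (Multiplicative ℤ)

/-- `ev n` is the value (in `ℤₘ₀ = WithZero (Multiplicative ℤ)`) of an element of additive
valuation `n`; thus `x ∈ 𝔭^n` iff `v x ≤ ev n`, `x ∈ 𝔬` iff `v x ≤ ev 0`, `x ∈ 𝔬^×` iff
`v x = ev 0`, and "v(x) = n" (additively) iff `v x = ev n`. -/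
def ev (n : ℤ) : Zm0 := ((Multiplicative.ofAdd (-n) : Multiplicative ℤ) : Zm0)

lemma ev_zero : ev 0 = 1 := rfl

lemma ev_mul (m n : ℤ) : ev m * ev n = ev (m + n) := by
  rw [ev, ev, ev, ← WithZero.coe_mul, ← ofAdd_add]
  ring_nf

lemma ev_pow (n : ℤ) (k : ℕ) : ev n ^ k = ev (k * n) := by
  rw [ev, ev, ← WithZero.coe_pow, ← ofAdd_nsmul]
  norm_num

lemma ev_le_ev {m n : ℤ} : ev m ≤ ev n ↔ n ≤ m := by
  rw [ev, ev, WithZero.coe_le_coe, Multiplicative.ofAdd_le]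
  omega

lemma ev_inj {m n : ℤ} (h : ev m = ev n) : m = n := by
  have h1 := ev_le_ev.mp h.le
  have h2 := ev_le_ev.mp h.ge
  omega

lemma ev_ne_zero (n : ℤ) : ev n ≠ 0 := WithZero.coe_ne_zero

lemma exists_ev {x : Zm0} (hx : x ≠ 0) : ∃ n : ℤ, x = ev n := by
  obtain ⟨y, rfl⟩ := WithZero.ne_zero_iff_exists.mp hx
  exact ⟨-(Multiplicative.toAdd y), by simp [ev]⟩

/-- If L/F is unramified, then v_L(β) = 0 and v(a) = 0.
If L/F is ramified, then v_L(β) = v(a) and v(a) ∈ {0, 1}.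

Here F is a nonarchimedean local field of characteristic zero with normalized valuation `v`
(`v ϖ = 1` additively), a, b ∈ 𝔬, c ∈ 𝔬^×, d = b² − 4ac ≠ 0 is not a square in F,
L = F(√d) is the quadratic extension with normalized valuation `v_L`, β = (b + √d)/(2c),
and {1, β} is an 𝔬-basis of 𝔬_L.  "L/F unramified" means v_L(ϖ) = 1; "ramified" means
v_L(ϖ) = 2.  (The valuation `v_L` restricts to a multiple of `v` on F.) -/
theorem stmt0
    {F L : Type*} [Field F] [Field L] [CharZero F] [Algebra F L]
    (v : Valuation F Zm0) (vL : Valuation L Zm0)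
    (ϖ : F) (hϖ : v ϖ = ev 1)
    (ϖL : L) (hϖL : vL ϖL = ev 1)
    (a b c : F)
    (hao : v a ≤ ev 0) (hbo : v b ≤ ev 0) (hc : v c = ev 0)
    (hd0 : b ^ 2 - 4 * (a * c) ≠ 0)
    (hnonsq : ∀ r : F, r ^ 2 ≠ b ^ 2 - 4 * (a * c))
    (sqd : L) (hsqd : sqd ^ 2 = algebraMap F L (b ^ 2 - 4 * (a * c)))
    (hspan : ∀ z : L, ∃ s t : F, z = algebraMap F L s + algebraMap F L t * sqd)
    (β : L) (hβ : β = (algebraMap F L b + sqd) / (2 * algebraMap F L c))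
    -- {1, β} is an 𝔬-basis of 𝔬_L, i.e. 𝔬_L = 𝔬 + 𝔬·β :
    (hbasis : ∀ z : L, vL z ≤ ev 0 ↔
      ∃ s t : F, v s ≤ ev 0 ∧ v t ≤ ev 0 ∧ z = algebraMap F L s + algebraMap F L t * β)
    -- v_L restricted to F is e·v for the ramification index e ≥ 1 :
    (hcomp : ∃ e : ℕ, 0 < e ∧ ∀ x : F, vL (algebraMap F L x) = (v x) ^ e) :
    (vL (algebraMap F L ϖ) = ev 1 → vL β = ev 0 ∧ v a = ev 0) ∧
    (vL (algebraMap F L ϖ) = ev 2 → vL β = v a ∧ (v a = ev 0 ∨ v a = ev 1)) := by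
  obtain ⟨e, he, hcompat⟩ := hcomp
  set A := algebraMap F L with hAdef
  have hA : Function.Injective A := (algebraMap F L).injective
  have hLchar : CharZero L := (RingHom.charZero_iff hA).mp ‹CharZero F›
  have h2L : (2 : L) ≠ 0 := two_ne_zero
  have hcne : c ≠ 0 := by
    intro h; rw [h, map_zero] at hc; exact ev_ne_zero 0 hc.symm
  have hAc : A c ≠ 0 := fun h => hcne (hA (by rw [h, map_zero]))
  have hane : a ≠ 0 := by
    intro h; exact hnonsq b (by rw [h]; ring)
  have hϖne : ϖ ≠ 0 := by
    intro h; rw [h, map_zero] at hϖ; exact ev_ne_zero 1 hϖ.symm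
  -- sqd in terms of β
  have hsqd' : sqd = 2 * A c * β - A b := by
    rw [hβ]; field_simp; ring
  -- β is not in the image of F
  have hβnr : ∀ u : F, β ≠ A u := by
    intro u h
    apply hnonsq (2 * c * u - b)
    apply hA
    rw [map_pow]
    rw [← hsqd, hsqd', h]
    push_cast [map_sub, map_mul, map_ofNat]
    ring
  have hβne : β ≠ 0 := by
    intro h; exact hβnr 0 (by rw [h, map_zero])
  -- quadratic relation
  have hquad : A c * β ^ 2 - A b * β + A a = 0 := by
    have h4c : (4 : L) * A c ≠ 0 := by
      apply mul_ne_zero _ hAc; norm_num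
    have heq : (2 * A c * β - A b) ^ 2 = A b ^ 2 - 4 * (A a * A c) := by
      rw [← hsqd', hsqd]
      push_cast [map_sub, map_mul, map_pow, map_ofNat]
      ring
    have key : (4 : L) * A c * (A c * β ^ 2 - A b * β + A a) = 0 := by
      linear_combination heq
    exact (mul_eq_zero.mp key).resolve_left h4c
  -- the key lemma: β - A u is never divisible by ϖ
  have hAϖne : A ϖ ≠ 0 := fun h => hϖne (hA (by rw [h, map_zero]))
  have hkey : ∀ u : F, ¬ (vL (β - A u) ≤ vL (A ϖ)) := by
    intro u hle
    have hz : vL ((β - A u) / A ϖ) ≤ ev 0 := by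
      rw [map_div₀, ev_zero]
      rw [div_le_one₀]
      · exact hle
      · rw [hcompat, hϖ, ev_pow]
        exact lt_of_le_of_ne zero_le' (Ne.symm (ev_ne_zero _))
    obtain ⟨s, t, hs, ht, hz'⟩ := (hbasis _).mp hz
    have hzz : β - A u = A (s * ϖ) + A (t * ϖ) * β := by
      have h1 : (β - A u) / A ϖ * A ϖ = β - A u := div_mul_cancel₀ _ hAϖne
      rw [← h1, hz', map_mul, map_mul]; ring
    have htϖ : v (t * ϖ) ≤ ev 1 := by
      rw [map_mul, hϖ]
      calc v t * ev 1 ≤ ev 0 * ev 1 := mul_le_mul_left ht _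
        _ = ev 1 := by rw [ev_mul]; norm_num
    have hneF : (1 : F) - t * ϖ ≠ 0 := by
      intro h
      have hteq : t * ϖ = 1 := (sub_eq_zero.mp h).symm
      rw [hteq, map_one] at htϖ
      have := ev_le_ev.mp (show ev 0 ≤ ev 1 from htϖ)
      omega
    have hneL : (1 : L) - A (t * ϖ) ≠ 0 := by
      intro h
      apply hneF
      apply hA
      rw [map_sub, map_one, map_zero, h]
    apply hβnr ((s * ϖ + u) / (1 - t * ϖ))
    rw [map_div₀, map_add, map_sub, map_one]
    rw [eq_div_iff hneL]
    linear_combination hzz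
  -- β is integral
  have hβint : vL β ≤ ev 0 := by
    rw [hbasis]
    exact ⟨0, 1, by rw [map_zero]; exact zero_le', by rw [map_one, ev_zero],
      by rw [map_zero, map_one]; ring⟩
  -- the conjugate β' = A(b/c) - β
  have hprod : β * (A (b / c) - β) = A (a / c) := by
    rw [map_div₀, map_div₀, eq_div_iff hAc]
    have hstep : (A b / A c - β) * A c = A b - β * A c := by rw [sub_mul, div_mul_cancel₀ _ hAc]
    rw [mul_assoc, hstep]
    linear_combination -hquad
  have hβ'ne : A (b / c) - β ≠ 0 := by
    intro h
    exact hβnr (b / c) (by rw [sub_eq_zero] at h; exact h.symm)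
  have hβ'int : vL (A (b / c) - β) ≤ ev 0 := by
    refine le_trans (vL.map_sub _ _) (max_le ?_ hβint)
    rw [hcompat, map_div₀, hc, ev_zero, div_one, ← ev_zero]
    calc (v b) ^ e ≤ (ev 0) ^ e := pow_le_pow_left' hbo e
      _ = ev 0 := by rw [ev_pow]; norm_num
  -- extract integers
  have hvβne : vL β ≠ 0 := by rwa [Ne, Valuation.zero_iff]
  have hvβ'ne : vL (A (b / c) - β) ≠ 0 := by rwa [Ne, Valuation.zero_iff]
  have hvane : v a ≠ 0 := by rwa [Ne, Valuation.zero_iff]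
  obtain ⟨k, hk⟩ := exists_ev hvβne
  obtain ⟨j, hj⟩ := exists_ev hvβ'ne
  obtain ⟨m, hm⟩ := exists_ev hvane
  have hk0 : 0 ≤ k := by have := ev_le_ev.mp (hk ▸ hβint); omega
  have hj0 : 0 ≤ j := by have := ev_le_ev.mp (hj ▸ hβ'int); omega
  have hm0 : 0 ≤ m := by have := ev_le_ev.mp (hm ▸ hao); omega
  have hAϖ : vL (A ϖ) = ev e := by
    rw [hcompat, hϖ, ev_pow]; norm_num
  have hke : k < e := by
    have h0 := hkey 0
    rw [map_zero, sub_zero, hk, hAϖ] at h0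
    have := (not_iff_not.mpr ev_le_ev).mp h0
    omega
  have hje : j < e := by
    have h0 := hkey (b / c)
    rw [show β - A (b / c) = -(A (b / c) - β) by ring, Valuation.map_neg, hj, hAϖ] at h0
    have := (not_iff_not.mpr ev_le_ev).mp h0
    omega
  have hsum : k + j = e * m := by
    have h1 : vL β * vL (A (b / c) - β) = vL (A (a / c)) := by
      rw [← Valuation.map_mul, hprod]
    rw [hk, hj, ev_mul, hcompat, map_div₀, hc, ev_zero, div_one, hm, ev_pow] at h1
    exact ev_inj h1
  constructor
  · intro h1
    have he1 : e = 1 := by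
      have := ev_inj (hAϖ.symm.trans h1); omega
    subst he1
    have hkm : k = 0 ∧ m = 0 := by omega
    rw [hk, hm, hkm.1, hkm.2]
    exact ⟨rfl, rfl⟩
  · intro h2
    have he2 : e = 2 := by
      have := ev_inj (hAϖ.symm.trans h2); omega
    subst he2
    have hkm : k = m ∧ (m = 0 ∨ m = 1) := by omega
    rw [hk, hm, hkm.1]
    refine ⟨rfl, ?_⟩
    rcases hkm.2 with h | h
    · left; rw [h]
    · right; rw [h]
end
end

section
/- Assume d is not a square in F. Then: (1) for every integer r ≥ 1, T(F)·diag(ϖ^r, 1)·GL₂(o) = T(F)·diag(ϖ^r, 1)·I ∪ T(F)·diag(ϖ^r, 1)·w·I, and the two double cosets on the right are disjoint; (2) if a + bu + cu² ∈ o^× for every u ∈ o, then T(F)·GL₂(o) = T(F)·I = T(F)·w·I; (3) if u₀ ∈ o satisfies c·u₀² + b·u₀ + a ∈ p, while a + bu + cu² ∈ o^× for every u ∈ o with u − u₀ ∉ p, then T(F)·GL₂(o) = T(F)·w·I ∪ T(F)·[[1, 0], [u₀, 1]]·I and these two double cosets are disjoint. -/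
open scoped Pointwise
open Matrix

noncomputable section

variable {F : Type*} [Field F]

/-- the matrix t(x,y) = [[x, cy],[−ay, x−by]] -/
def tmat (a b c x y : F) : Matrix (Fin 2) (Fin 2) F :=
  !![x, c * y; -(a * y), x - b * y]

/-- the torus T(F) ⊆ GL₂(F), as a set of matrices -/
def TSet (a b c : F) : Set (Matrix (Fin 2) (Fin 2) F) :=
  {m | ∃ x y : F, x ^ 2 - b * x * y + a * c * y ^ 2 ≠ 0 ∧ m = tmat a b c x y}

def wmat (F : Type*) [Field F] : Matrix (Fin 2) (Fin 2) F := !![0, 1; -1, 0]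

/-- GL₂(𝔬) : integral entries and unit determinant -/
def GL2O (v : Valuation F Zm0) : Set (Matrix (Fin 2) (Fin 2) F) :=
  {g | (∀ i j, v (g i j) ≤ ev 0) ∧ v g.det = ev 0}

/-- the Iwahori subgroup I = { g ∈ GL₂(𝔬) : g₂₁ ∈ 𝔭 } -/
def Iwahori (v : Valuation F Zm0) : Set (Matrix (Fin 2) (Fin 2) F) :=
  {g | g ∈ GL2O v ∧ v (g 1 0) ≤ ev 1}

set_option linter.unusedSectionVars false

namespace St8
lemma ev_le_ev {m n : ℤ} : ev m ≤ ev n ↔ n ≤ m := by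
  rw [ev, ev, WithZero.coe_le_coe, Multiplicative.ofAdd_le]; omega
lemma ev_lt_ev {m n : ℤ} : ev m < ev n ↔ n < m := by
  rw [ev, ev, WithZero.coe_lt_coe, Multiplicative.ofAdd_lt]; omega
lemma ev_mul (m n : ℤ) : ev m * ev n = ev (m + n) := by
  rw [ev, ev, ev, ← WithZero.coe_mul, ← ofAdd_add]; ring_nf
lemma ev_ne_zero (n : ℤ) : ev n ≠ 0 := WithZero.coe_ne_zero
variable {v : Valuation F Zm0}
lemma unit_ne_zero {x : F} (hx : v x = ev 0) : x ≠ 0 := by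
  intro h; rw [h, Valuation.map_zero] at hx; exact ev_ne_zero 0 hx.symm
lemma val_mul_le {x y : F} {m n : ℤ} (hx : v x ≤ ev m) (hy : v y ≤ ev n) :
    v (x * y) ≤ ev (m + n) := by
  rw [Valuation.map_mul, ← ev_mul]; exact mul_le_mul' hx hy
lemma val_int_mul {x y : F} (hx : v x ≤ ev 0) (hy : v y ≤ ev 0) : v (x * y) ≤ ev 0 := by
  simpa using val_mul_le hx hy
lemma val_add_le {x y : F} {ζ : Zm0} (hx : v x ≤ ζ) (hy : v y ≤ ζ) : v (x + y) ≤ ζ :=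
  le_trans (v.map_add x y) (max_le hx hy)
lemma val_unit_mul {x y : F} (hx : v x = ev 0) (hy : v y = ev 0) : v (x * y) = ev 0 := by
  rw [Valuation.map_mul, hx, hy, ev_mul]; norm_num
lemma val_inv {x : F} (hx : v x = ev 0) : v x⁻¹ = ev 0 := by
  rw [map_inv₀, hx]; rfl
lemma val_div_le {x N : F} (hx : v x ≤ ev 0) (hN : v N = ev 0) : v (x / N) ≤ ev 0 := by
  rw [div_eq_mul_inv]; exact val_int_mul hx (le_of_eq (val_inv hN))
lemma val_div_unit {x N : F} (hx : v x = ev 0) (hN : v N = ev 0) : v (x / N) = ev 0 := by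
  rw [div_eq_mul_inv]; exact val_unit_mul hx (val_inv hN)
lemma val_gap {ζ : Zm0} (h0 : ζ ≤ ev 0) (h1 : ¬ ζ ≤ ev 1) : ζ = ev 0 := by
  have hne : ζ ≠ 0 := by
    intro h; exact h1 (h ▸ (zero_le' : (0:Zm0) ≤ ev 1))
  obtain ⟨m, rfl⟩ := WithZero.ne_zero_iff_exists.mp hne
  rw [ev, WithZero.coe_le_coe] at h0 h1
  rw [ev, WithZero.coe_inj]
  have h0' : Multiplicative.toAdd m ≤ -(0:ℤ) := Int.le_def.mpr h0
  have h1' : ¬ Multiplicative.toAdd m ≤ -(1:ℤ) := fun h =>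
    h1 (by simpa using Multiplicative.toAdd_le.mp (by simpa using h))
  have : Multiplicative.toAdd m = 0 := by omega
  have hm : m = Multiplicative.ofAdd (Multiplicative.toAdd m) := rfl
  rw [hm, this]; rfl
lemma val_add_eq_left {x y : F} (h : v y < v x) : v (x + y) = v x := by
  by_contra hne
  have hle : v (x + y) ≤ v x := le_trans (v.map_add x y) (by simp [le_of_lt h])
  have hlt : v (x + y) < v x := lt_of_le_of_ne hle hne
  have : v x ≤ max (v (x+y)) (v y) := by
    have := v.map_add (x+y) (-y); simpa using this
  rcases max_cases (v (x+y)) (v y) with ⟨he, _⟩ | ⟨he, _⟩ <;> rw [he] at this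
  · exact absurd (lt_of_le_of_lt this hlt) (lt_irrefl _)
  · exact absurd (lt_of_le_of_lt this h) (lt_irrefl _)
lemma ev_one_pow (r : ℕ) : (ev 1)^r = ev r := by
  induction r with
  | zero => rfl
  | succ n ih => rw [pow_succ, ih, ev_mul]; norm_num
lemma val_pow {ϖ : F} (hϖ : v ϖ = ev 1) (r : ℕ) : v (ϖ ^ r) = ev r := by
  rw [map_pow, hϖ, ev_one_pow]

lemma mul_entry (g h : Matrix (Fin 2) (Fin 2) F) (i j : Fin 2) :
    (g * h) i j = g i 0 * h 0 j + g i 1 * h 1 j := by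
  rw [Matrix.mul_apply, Fin.sum_univ_two]

lemma int_entries {e f g h : F} (he : v e ≤ ev 0) (hf : v f ≤ ev 0) (hg : v g ≤ ev 0)
    (hh : v h ≤ ev 0) : ∀ i j, v (!![e, f; g, h] i j) ≤ ev 0 := by
  intro i j; fin_cases i <;> fin_cases j <;> simpa

lemma GL2O_mul {g h : Matrix (Fin 2) (Fin 2) F} (hg : g ∈ GL2O v) (hh : h ∈ GL2O v) :
    g * h ∈ GL2O v := by
  refine ⟨fun i j => ?_, ?_⟩
  · rw [mul_entry]
    exact val_add_le (val_int_mul (hg.1 i 0) (hh.1 0 j)) (val_int_mul (hg.1 i 1) (hh.1 1 j))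
  · rw [Matrix.det_mul]; exact val_unit_mul hg.2 hh.2

lemma Iwahori_mul {g h : Matrix (Fin 2) (Fin 2) F} (hg : g ∈ Iwahori v) (hh : h ∈ Iwahori v) :
    g * h ∈ Iwahori v := by
  refine ⟨GL2O_mul hg.1 hh.1, ?_⟩
  rw [mul_entry]
  refine val_add_le ?_ ?_
  · simpa using val_mul_le hg.2 (hh.1.1 0 0)
  · simpa using val_mul_le (hg.1.1 1 1) hh.2

lemma mat2_eq {p q r s p' q' r' s' : F} (h1 : p = p') (h2 : q = q') (h3 : r = r')
    (h4 : s = s') : !![p,q;r,s] = !![p',q';r',s'] := by rw [h1,h2,h3,h4]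

lemma Iwahori_inv {g : Matrix (Fin 2) (Fin 2) F} (hg : g ∈ Iwahori v) :
    ∃ h ∈ Iwahori v, g * h = 1 ∧ h * g = 1 := by
  obtain ⟨p, q, r, s, rfl⟩ : ∃ p q r s, g = !![p,q;r,s] := ⟨_,_,_,_, Matrix.eta_fin_two g⟩
  have hdet : (!![p,q;r,s] : Matrix (Fin 2) (Fin 2) F).det = p*s - q*r :=
    Matrix.det_fin_two_of p q r s
  have hd : v (p*s - q*r) = ev 0 := hdet ▸ hg.1.2
  have hd0 : p*s - q*r ≠ 0 := unit_ne_zero hd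
  have hp : v p ≤ ev 0 := hg.1.1 0 0
  have hq : v q ≤ ev 0 := hg.1.1 0 1
  have hr : v r ≤ ev 0 := hg.1.1 1 0
  have hs : v s ≤ ev 0 := hg.1.1 1 1
  have hr1 : v r ≤ ev 1 := hg.2
  have hmul : (!![p,q;r,s] : Matrix (Fin 2) (Fin 2) F)
      * !![s/(p*s-q*r), -q/(p*s-q*r); -r/(p*s-q*r), p/(p*s-q*r)] = 1 := by
    generalize hD : p*s-q*r = D at hd0 ⊢
    rw [Matrix.mul_fin_two, Matrix.one_fin_two]
    apply mat2_eq <;> (field_simp; try (subst hD; ring))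
  have hmul2 : (!![s/(p*s-q*r), -q/(p*s-q*r); -r/(p*s-q*r), p/(p*s-q*r)] : Matrix (Fin 2) (Fin 2) F)
      * !![p,q;r,s] = 1 := by
    generalize hD : p*s-q*r = D at hd0 ⊢
    rw [Matrix.mul_fin_two, Matrix.one_fin_two]
    apply mat2_eq <;> (field_simp; try (subst hD; ring))
  have hdet2 : v (!![s/(p*s-q*r), -q/(p*s-q*r); -r/(p*s-q*r), p/(p*s-q*r)]
      : Matrix (Fin 2) (Fin 2) F).det = ev 0 := by
    have h1 := congrArg Matrix.det hmul
    rw [Matrix.det_mul, Matrix.det_one] at h1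
    have h2 := congrArg v h1
    rw [Valuation.map_mul, Valuation.map_one, hg.1.2] at h2
    rw [show (ev 0 : Zm0) = 1 from rfl, one_mul] at h2
    rw [h2]; rfl
  refine ⟨!![s/(p*s-q*r), -q/(p*s-q*r); -r/(p*s-q*r), p/(p*s-q*r)], ⟨⟨?_, hdet2⟩, ?_⟩, hmul, hmul2⟩
  · exact int_entries (val_div_le hs hd) (val_div_le (by simpa using hq) hd)
      (val_div_le (by simpa using hr) hd) (val_div_le hp hd)
  · show v (-r/(p*s-q*r)) ≤ ev 1
    rw [map_div₀, Valuation.map_neg, hd, show (ev 0 : Zm0) = 1 from rfl, div_one]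
    exact hr1

lemma TSet_mul {a b c : F} {t t' : Matrix (Fin 2) (Fin 2) F} (ht : t ∈ TSet a b c)
    (ht' : t' ∈ TSet a b c) : t * t' ∈ TSet a b c := by
  obtain ⟨x, y, hN, rfl⟩ := ht
  obtain ⟨x', y', hN', rfl⟩ := ht'
  refine ⟨x*x' - a*c*(y*y'), x*y' + y*x' - b*(y*y'), ?_, ?_⟩
  · have : (x*x' - a*c*(y*y'))^2 - b*(x*x' - a*c*(y*y'))*(x*y' + y*x' - b*(y*y'))
        + a*c*(x*y' + y*x' - b*(y*y'))^2
        = (x^2 - b*x*y + a*c*y^2) * (x'^2 - b*x'*y' + a*c*y'^2) := by ring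
    rw [this]
    exact mul_ne_zero hN hN'
  · rw [tmat, tmat, tmat, Matrix.mul_fin_two]
    apply mat2_eq <;> ring

lemma TSet_inv {a b c : F} {t : Matrix (Fin 2) (Fin 2) F} (ht : t ∈ TSet a b c) :
    ∃ t2 ∈ TSet a b c, t2 * t = 1 ∧ t * t2 = 1 := by
  obtain ⟨x, y, hN, rfl⟩ := ht
  set N := x^2 - b*x*y + a*c*y^2 with hNdef
  refine ⟨tmat a b c ((x - b*y)/N) (-y/N), ⟨(x - b*y)/N, -y/N, ?_, rfl⟩, ?_, ?_⟩
  · have : ((x - b*y)/N)^2 - b*((x - b*y)/N)*(-y/N) + a*c*(-y/N)^2 = N⁻¹ := by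
      field_simp; ring
    rw [this]
    exact inv_ne_zero hN
  · rw [tmat, tmat, Matrix.mul_fin_two, Matrix.one_fin_two]
    apply mat2_eq <;> (field_simp; ring)
  · rw [tmat, tmat, Matrix.mul_fin_two, Matrix.one_fin_two]
    apply mat2_eq <;> (field_simp; ring)

lemma one_mem_TSet {a b c : F} : (1 : Matrix (Fin 2) (Fin 2) F) ∈ TSet a b c := by
  refine ⟨1, 0, by norm_num, ?_⟩
  rw [tmat, Matrix.one_fin_two]
  apply mat2_eq <;> ring

lemma mem_mul3 {A B C : Set (Matrix (Fin 2) (Fin 2) F)} {g : Matrix (Fin 2) (Fin 2) F} :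
    g ∈ A * B * C ↔ ∃ x ∈ A, ∃ y ∈ B, ∃ z ∈ C, x * y * z = g := by
  constructor
  · rintro ⟨xy, ⟨x, hx, y, hy, rfl⟩, z, hz, rfl⟩
    exact ⟨x, hx, y, hy, z, hz, rfl⟩
  · rintro ⟨x, hx, y, hy, z, hz, rfl⟩
    exact ⟨x * y, ⟨x, hx, y, hy, rfl⟩, z, hz, rfl⟩

end St8

namespace St8
variable {v : Valuation F Zm0}

lemma val_le_weaken {x : F} {m n : ℤ} (h : v x ≤ ev m) (hnm : n ≤ m) : v x ≤ ev n :=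
  le_trans h (ev_le_ev.mpr hnm)

lemma val_sub_le {x y : F} {ζ : Zm0} (hx : v x ≤ ζ) (hy : v y ≤ ζ) : v (x - y) ≤ ζ := by
  rw [sub_eq_add_neg]
  exact val_add_le hx (by rw [Valuation.map_neg]; exact hy)

lemma val_int_sq {x : F} (hx : v x ≤ ev 0) : v (x^2) ≤ ev 0 := by
  rw [pow_two]; exact val_int_mul hx hx

lemma unit_of_unit_mul {N D dk : F} (hN : v N = ev 0) (h : N * D = dk)
    (hdk : v dk = ev 0) : v D = ev 0 := by
  have h2 := congrArg v h
  rw [Valuation.map_mul, hN, show (ev 0 : Zm0) = 1 from rfl, one_mul] at h2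
  rw [h2, hdk]

lemma val_zero_le {ζ : Zm0} : v (0 : F) ≤ ζ := by rw [Valuation.map_zero]; exact zero_le'

lemma val_one : v (1 : F) = ev 0 := by rw [Valuation.map_one]; rfl

lemma w_mem_GL2O : wmat F ∈ GL2O v := by
  constructor
  · rw [wmat]
    exact int_entries val_zero_le (le_of_eq val_one)
      (by rw [Valuation.map_neg]; exact le_of_eq val_one) val_zero_le
  · rw [wmat, Matrix.det_fin_two_of, show (0:F)*0 - 1*(-1) = 1 by ring]; exact val_one

lemma absorb3 {a b c : F} {B C : Set (Matrix (Fin 2) (Fin 2) F)}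
    {t1 k : Matrix (Fin 2) (Fin 2) F} (ht1 : t1 ∈ TSet a b c)
    (hk : k ∈ TSet a b c * B * C) : t1 * k ∈ TSet a b c * B * C := by
  obtain ⟨t, ht, y, hy, z, hz, heq⟩ := mem_mul3.mp hk
  refine mem_mul3.mpr ⟨t1 * t, TSet_mul ht1 ht, y, hy, z, hz, ?_⟩
  simp only [mul_assoc] at heq ⊢
  rw [heq]

lemma absorb2 {a b c : F} {C : Set (Matrix (Fin 2) (Fin 2) F)}
    {t1 k : Matrix (Fin 2) (Fin 2) F} (ht1 : t1 ∈ TSet a b c)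
    (hk : k ∈ TSet a b c * C) : t1 * k ∈ TSet a b c * C := by
  obtain ⟨t, ht, z, hz, heq⟩ := Set.mem_mul.mp hk
  refine Set.mem_mul.mpr ⟨t1 * t, TSet_mul ht1 ht, z, hz, ?_⟩
  simp only [mul_assoc] at heq ⊢
  rw [heq]

/-- if the (0,0) entry is in 𝔭 then k ∈ wI ⊆ T·w·I -/
lemma case_w_p {a b c α β γ δ : F} (hk : !![α,β;γ,δ] ∈ GL2O v) (hα : v α ≤ ev 1) :
    !![α,β;γ,δ] ∈ TSet a b c * {wmat F} * Iwahori v := by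
  have hdk : v (α*δ - β*γ) = ev 0 := by
    have := hk.2; rwa [Matrix.det_fin_two_of] at this
  refine mem_mul3.mpr ⟨1, one_mem_TSet, wmat F, rfl, !![-γ,-δ;α,β], ⟨⟨?_, ?_⟩, hα⟩, ?_⟩
  · exact int_entries (by rw [Valuation.map_neg]; exact hk.1 1 0)
      (by rw [Valuation.map_neg]; exact hk.1 1 1) (hk.1 0 0) (hk.1 0 1)
  · rw [Matrix.det_fin_two_of, show -γ*β - -δ*α = α*δ - β*γ by ring]; exact hdk
  · rw [one_mul, wmat, Matrix.mul_fin_two]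
    apply mat2_eq <;> ring

/-- if the (0,0) entry is a unit and a + bu + cu² is a unit for u = γ/α, then k ∈ T·w·I -/
lemma case_w_unit {a b c α β γ δ : F} (hc : v c = ev 0) (hao : v a ≤ ev 0) (hbo : v b ≤ ev 0)
    (hk : !![α,β;γ,δ] ∈ GL2O v) (hα : v α = ev 0)
    (hu : v (a + b*(γ/α) + c*(γ/α)^2) = ev 0) :
    !![α,β;γ,δ] ∈ TSet a b c * {wmat F} * Iwahori v := by
  have hα0 : α ≠ 0 := unit_ne_zero hα
  have hc0 : c ≠ 0 := unit_ne_zero hc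
  have hαi : v α ≤ ev 0 := le_of_eq hα
  have hβ : v β ≤ ev 0 := hk.1 0 1
  have hγ : v γ ≤ ev 0 := hk.1 1 0
  have hδ : v δ ≤ ev 0 := hk.1 1 1
  have hdk : v (α*δ - β*γ) = ev 0 := by
    have := hk.2; rwa [Matrix.det_fin_two_of] at this
  have key : a*α^2 + b*α*γ + c*γ^2 = (a + b*(γ/α) + c*(γ/α)^2) * α^2 := by
    field_simp
  have hα2 : v (α^2) = ev 0 := by rw [pow_two]; exact val_unit_mul hα hα
  have hNu : v (c*(a*α^2 + b*α*γ + c*γ^2)) = ev 0 :=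
    val_unit_mul hc (by rw [key]; exact val_unit_mul hu hα2)
  have hN0 : c*(a*α^2 + b*α*γ + c*γ^2) ≠ 0 := unit_ne_zero hNu
  have hxo : v (b*α + c*γ) ≤ ev 0 :=
    val_add_le (val_int_mul hbo hαi) (val_int_mul (le_of_eq hc) hγ)
  have hnorm : (b*α + c*γ)^2 - b*(b*α + c*γ)*α + a*c*α^2 = c*(a*α^2 + b*α*γ + c*γ^2) := by
    ring
  have hprod : tmat a b c (b*α + c*γ) α * wmat F *
      !![-(1/c), -(a*α*β + (b*α+c*γ)*δ)/(c*(a*α^2 + b*α*γ + c*γ^2)); 0,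
         (c*γ*β - c*α*δ)/(c*(a*α^2 + b*α*γ + c*γ^2))] = !![α,β;γ,δ] := by
    generalize hD : c*(a*α^2 + b*α*γ + c*γ^2) = D at hN0 ⊢
    rw [tmat, wmat, Matrix.mul_fin_two, Matrix.mul_fin_two]
    apply mat2_eq <;> (field_simp; try (subst hD; ring))
  refine mem_mul3.mpr ⟨tmat a b c (b*α + c*γ) α, ⟨b*α + c*γ, α, by rw [hnorm]; exact hN0, rfl⟩,
    wmat F, rfl, _, ⟨⟨?_, ?_⟩, ?_⟩, hprod⟩
  · refine int_entries ?_ ?_ val_zero_le ?_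
    · rw [Valuation.map_neg, one_div]; exact le_of_eq (val_inv hc)
    · rw [neg_div, Valuation.map_neg]
      exact val_div_le (val_add_le (val_int_mul (val_int_mul hao hαi) hβ)
        (val_int_mul hxo hδ)) hNu
      
    · have : c*γ*β - c*α*δ = -(c*(α*δ - β*γ)) := by ring
      rw [this, neg_div, Valuation.map_neg]
      exact val_div_le (le_of_eq (val_unit_mul hc hdk)) hNu
  · -- determinant of the Iwahori factor
    have hdt : (tmat a b c (b*α + c*γ) α).det = c*(a*α^2 + b*α*γ + c*γ^2) := by
      rw [tmat, Matrix.det_fin_two_of]; ring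
    have hdw : (wmat F).det = 1 := by
      rw [wmat, Matrix.det_fin_two_of]; ring
    have h6 := congrArg Matrix.det hprod
    rw [Matrix.det_mul, Matrix.det_mul, hdt, hdw, mul_one, Matrix.det_fin_two_of,
      Matrix.det_fin_two_of] at h6
    rw [Matrix.det_fin_two_of]
    exact unit_of_unit_mul hNu h6 hdk
  · exact val_zero_le

/-- (0,0) entry unit, residual-unit condition: k ∈ T·I (diagonal case) -/
lemma case_I_unit {a b c α β γ δ : F} (hc : v c = ev 0) (hao : v a ≤ ev 0) (hbo : v b ≤ ev 0)
    (hk : !![α,β;γ,δ] ∈ GL2O v) (hγ : v γ = ev 0)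
    (hu : v (a + b*(a*α/(c*γ)) + c*(a*α/(c*γ))^2) = ev 0) :
    !![α,β;γ,δ] ∈ TSet a b c * Iwahori v := by
  have hγ0 : γ ≠ 0 := unit_ne_zero hγ
  have hc0 : c ≠ 0 := unit_ne_zero hc
  have hαi : v α ≤ ev 0 := hk.1 0 0
  have hβ : v β ≤ ev 0 := hk.1 0 1
  have hγi : v γ ≤ ev 0 := le_of_eq hγ
  have hδ : v δ ≤ ev 0 := hk.1 1 1
  have hdk : v (α*δ - β*γ) = ev 0 := by
    have := hk.2; rwa [Matrix.det_fin_two_of] at this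
  have key : a^2*α^2 + a*b*α*γ + a*c*γ^2 = (a + b*(a*α/(c*γ)) + c*(a*α/(c*γ))^2) * (c*γ^2) := by
    field_simp; ring
  have hγ2 : v (c*γ^2) = ev 0 := val_unit_mul hc (by rw [pow_two]; exact val_unit_mul hγ hγ)
  have hNu : v (a^2*α^2 + a*b*α*γ + a*c*γ^2) = ev 0 := by
    rw [key]; exact val_unit_mul hu hγ2
  have hN0 : a^2*α^2 + a*b*α*γ + a*c*γ^2 ≠ 0 := unit_ne_zero hNu
  have hnorm : (-(a*α))^2 - b*(-(a*α))*γ + a*c*γ^2 = a^2*α^2 + a*b*α*γ + a*c*γ^2 := by ring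
  have hxo : v (-(a*α)) ≤ ev 0 := by rw [Valuation.map_neg]; exact val_int_mul hao hαi
  have hprod : tmat a b c (-(a*α)) γ *
      !![((-(a*α) - b*γ)*α - c*γ^2)/(a^2*α^2 + a*b*α*γ + a*c*γ^2),
         ((-(a*α) - b*γ)*β - c*γ*δ)/(a^2*α^2 + a*b*α*γ + a*c*γ^2); 0,
         (a*γ*β + -(a*α)*δ)/(a^2*α^2 + a*b*α*γ + a*c*γ^2)] = !![α,β;γ,δ] := by
    generalize hD : a^2*α^2 + a*b*α*γ + a*c*γ^2 = D at hN0 ⊢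
    rw [tmat, Matrix.mul_fin_two]
    apply mat2_eq <;> (field_simp; subst hD; ring)
  refine Set.mem_mul.mpr ⟨tmat a b c (-(a*α)) γ, ⟨-(a*α), γ, by rw [hnorm]; exact hN0, rfl⟩,
    _, ⟨⟨?_, ?_⟩, ?_⟩, hprod⟩
  · refine int_entries ?_ ?_ val_zero_le ?_
    · exact val_div_le (val_sub_le (val_int_mul (val_sub_le hxo (val_int_mul hbo hγi)) hαi)
        (val_int_mul (le_of_eq hc) (val_int_sq hγi))) hNu
    · exact val_div_le (val_sub_le (val_int_mul (val_sub_le hxo (val_int_mul hbo hγi)) hβ)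
        (val_int_mul (val_int_mul (le_of_eq hc) hγi) hδ)) hNu
    · exact val_div_le (val_add_le (val_int_mul (val_int_mul hao hγi) hβ)
        (val_int_mul hxo hδ)) hNu
  · have hdt : (tmat a b c (-(a*α)) γ).det = a^2*α^2 + a*b*α*γ + a*c*γ^2 := by
      rw [tmat, Matrix.det_fin_two_of]; ring
    have h6 := congrArg Matrix.det hprod
    rw [Matrix.det_mul, hdt, Matrix.det_fin_two_of, Matrix.det_fin_two_of] at h6
    rw [Matrix.det_fin_two_of]
    exact unit_of_unit_mul hNu h6 hdk
  · exact val_zero_le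

/-- case for part (3): (0,0) entry unit and γ/α ≡ u₀: k ∈ n·I -/
lemma case_n {a b c u₀ α β γ δ : F} (hu₀ : v u₀ ≤ ev 0)
    (hk : !![α,β;γ,δ] ∈ GL2O v) (hα : v α = ev 0)
    (hsub : v (γ/α - u₀) ≤ ev 1) :
    !![α,β;γ,δ] ∈ TSet a b c * ({!![1,0;u₀,1]} : Set (Matrix (Fin 2) (Fin 2) F)) * Iwahori v := by
  have hα0 : α ≠ 0 := unit_ne_zero hα
  have hdk : v (α*δ - β*γ) = ev 0 := by
    have := hk.2; rwa [Matrix.det_fin_two_of] at this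
  have hprod : (1 : Matrix (Fin 2) (Fin 2) F) * !![1,0;u₀,1] * !![α, β; γ - u₀*α, δ - u₀*β]
      = !![α,β;γ,δ] := by
    rw [one_mul, Matrix.mul_fin_two]
    apply mat2_eq <;> ring
  refine mem_mul3.mpr ⟨1, one_mem_TSet, !![1,0;u₀,1], rfl, _, ⟨⟨?_, ?_⟩, ?_⟩, hprod⟩
  · exact int_entries (hk.1 0 0) (hk.1 0 1)
      (val_sub_le (hk.1 1 0) (val_int_mul hu₀ (hk.1 0 0)))
      (val_sub_le (hk.1 1 1) (val_int_mul hu₀ (hk.1 0 1)))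
  · have h6 := congrArg Matrix.det hprod
    rw [one_mul, Matrix.det_mul, Matrix.det_fin_two_of (1:F) 0 u₀ 1] at h6
    norm_num at h6
    rw [Matrix.det_fin_two_of, h6]
    exact hdk
  · show v (γ - u₀*α) ≤ ev 1
    have : γ - u₀*α = (γ/α - u₀)*α := by field_simp
    rw [this]
    simpa using val_mul_le hsub (le_of_eq hα)

end St8

namespace St8
variable {v : Valuation F Zm0}

lemma nmat_mem_GL2O {u₀ : F} (hu₀ : v u₀ ≤ ev 0) :
    (!![1,0;u₀,1] : Matrix (Fin 2) (Fin 2) F) ∈ GL2O v := by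
  constructor
  · exact int_entries (le_of_eq val_one) val_zero_le hu₀ (le_of_eq val_one)
  · rw [Matrix.det_fin_two_of, show (1:F)*1 - 0*u₀ = 1 by ring]; exact val_one

/-- Part (2) -/
lemma part_two {a b c : F} (hc : v c = ev 0) (hao : v a ≤ ev 0) (hbo : v b ≤ ev 0)
    (hQ : ∀ u : F, v u ≤ ev 0 → v (a + b * u + c * u ^ 2) = ev 0) :
    TSet a b c * GL2O v = TSet a b c * Iwahori v ∧
    TSet a b c * GL2O v = TSet a b c * ({wmat F} : Set (Matrix (Fin 2) (Fin 2) F)) * Iwahori v := by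
  constructor
  · apply Set.Subset.antisymm
    · rintro g ⟨t1, ht1, k, hk, rfl⟩
      by_cases h10 : v (k 1 0) ≤ ev 1
      · exact Set.mem_mul.mpr ⟨t1, ht1, k, ⟨hk, h10⟩, rfl⟩
      · have hγ : v (k 1 0) = ev 0 := val_gap (hk.1 1 0) h10
        obtain ⟨α, β, γ, δ, hke⟩ : ∃ α β γ δ, k = !![α,β;γ,δ] := ⟨_,_,_,_, Matrix.eta_fin_two k⟩
        subst hke
        have hγ' : v γ = ev 0 := hγ
        have hu : v (a*α/(c*γ)) ≤ ev 0 :=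
          val_div_le (val_int_mul hao (hk.1 0 0)) (val_unit_mul hc hγ')
        exact absorb2 ht1 (case_I_unit hc hao hbo hk hγ' (hQ _ hu))
    · rintro g ⟨t1, ht1, i, hi, rfl⟩
      exact ⟨t1, ht1, i, hi.1, rfl⟩
  · apply Set.Subset.antisymm
    · rintro g ⟨t1, ht1, k, hk, rfl⟩
      by_cases h00 : v (k 0 0) ≤ ev 1
      · obtain ⟨α, β, γ, δ, hke⟩ : ∃ α β γ δ, k = !![α,β;γ,δ] := ⟨_,_,_,_, Matrix.eta_fin_two k⟩
        subst hke
        exact absorb3 ht1 (case_w_p hk h00)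
      · have hα : v (k 0 0) = ev 0 := val_gap (hk.1 0 0) h00
        obtain ⟨α, β, γ, δ, hke⟩ : ∃ α β γ δ, k = !![α,β;γ,δ] := ⟨_,_,_,_, Matrix.eta_fin_two k⟩
        subst hke
        have hα' : v α = ev 0 := hα
        have hu : v (γ/α) ≤ ev 0 := val_div_le (hk.1 1 0) hα'
        exact absorb3 ht1 (case_w_unit hc hao hbo hk hα' (hQ _ hu))
    · intro g hg
      obtain ⟨t1, ht1, y, hy, i, hi, heq⟩ := mem_mul3.mp hg
      rw [Set.mem_singleton_iff] at hy; subst hy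
      refine ⟨t1, ht1, wmat F * i, GL2O_mul w_mem_GL2O hi.1, ?_⟩
      show t1 * (wmat F * i) = g
      rw [← mul_assoc]; exact heq

/-- Part (3), equality -/
lemma part_three_eq {a b c u₀ : F} (hc : v c = ev 0) (hao : v a ≤ ev 0) (hbo : v b ≤ ev 0)
    (hu₀ : v u₀ ≤ ev 0)
    (hQ : ∀ u : F, v u ≤ ev 0 → ¬ v (u - u₀) ≤ ev 1 → v (a + b * u + c * u ^ 2) = ev 0) :
    TSet a b c * GL2O v
      = (TSet a b c * ({wmat F} : Set (Matrix (Fin 2) (Fin 2) F)) * Iwahori v)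
        ∪ (TSet a b c * ({!![1, 0; u₀, 1]} : Set (Matrix (Fin 2) (Fin 2) F)) * Iwahori v) := by
  apply Set.Subset.antisymm
  · rintro g ⟨t1, ht1, k, hk, rfl⟩
    obtain ⟨α, β, γ, δ, hke⟩ : ∃ α β γ δ, k = !![α,β;γ,δ] := ⟨_,_,_,_, Matrix.eta_fin_two k⟩
    subst hke
    by_cases h00 : v (α) ≤ ev 1
    · exact Set.mem_union_left _ (absorb3 ht1 (case_w_p hk h00))
    · have hα : v α = ev 0 := val_gap (hk.1 0 0) h00
      by_cases hsub : v (γ/α - u₀) ≤ ev 1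
      · exact Set.mem_union_right _ (absorb3 ht1 (case_n hu₀ hk hα hsub))
      · have hu : v (γ/α) ≤ ev 0 := val_div_le (hk.1 1 0) hα
        exact Set.mem_union_left _ (absorb3 ht1 (case_w_unit hc hao hbo hk hα (hQ _ hu hsub)))
  · apply Set.union_subset
    · intro g hg
      obtain ⟨t1, ht1, y, hy, i, hi, heq⟩ := mem_mul3.mp hg
      rw [Set.mem_singleton_iff] at hy; subst hy
      refine ⟨t1, ht1, wmat F * i, GL2O_mul w_mem_GL2O hi.1, ?_⟩
      show t1 * (wmat F * i) = g
      rw [← mul_assoc]; exact heq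
    · intro g hg
      obtain ⟨t1, ht1, y, hy, i, hi, heq⟩ := mem_mul3.mp hg
      rw [Set.mem_singleton_iff] at hy; subst hy
      refine ⟨t1, ht1, !![1,0;u₀,1] * i, GL2O_mul (nmat_mem_GL2O hu₀) hi.1, ?_⟩
      show t1 * (!![1,0;u₀,1] * i) = g
      rw [← mul_assoc]; exact heq

/-- Part (3), disjointness -/
lemma part_three_disj {a b c u₀ : F} (hc : v c = ev 0) (hao : v a ≤ ev 0) (hbo : v b ≤ ev 0)
    (hu₀ : v u₀ ≤ ev 0) (hram : v (c * u₀ ^ 2 + b * u₀ + a) ≤ ev 1) :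
    (TSet a b c * ({wmat F} : Set (Matrix (Fin 2) (Fin 2) F)) * Iwahori v)
      ∩ (TSet a b c * ({!![1, 0; u₀, 1]} : Set (Matrix (Fin 2) (Fin 2) F)) * Iwahori v)
      = ∅ := by
  rw [Set.eq_empty_iff_forall_notMem]
  rintro g ⟨hg1, hg2⟩
  obtain ⟨t1, ht1, y1, hy1, i1, hi1, heq1⟩ := mem_mul3.mp hg1
  obtain ⟨t2, ht2, y2, hy2, i2, hi2, heq2⟩ := mem_mul3.mp hg2
  rw [Set.mem_singleton_iff] at hy1 hy2; subst hy1; subst hy2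
  obtain ⟨t2i, ht2i, ht2l, _⟩ := TSet_inv ht2
  obtain ⟨j1, hj1, hij1, _⟩ := Iwahori_inv hi1
  obtain ⟨x, y, hN0, hxy⟩ := TSet_mul ht2i ht1
  have e1 : t2i * (t1 * wmat F * i1) * j1 = t2i * (t2 * !![1,0;u₀,1] * i2) * j1 := by
    rw [heq1, heq2]
  simp only [mul_assoc] at e1
  rw [hij1, mul_one] at e1
  rw [← mul_assoc t2i t2, ht2l, one_mul] at e1
  rw [← mul_assoc t2i t1, hxy] at e1
  -- e1 : tmat a b c x y * wmat F = !![1,0;u₀,1] * (i2 * j1)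
  have hjjI : i2 * j1 ∈ Iwahori v := Iwahori_mul hi2 hj1
  obtain ⟨e, f, g2, h2, hjje⟩ : ∃ e f g2 h2, i2 * j1 = !![e,f;g2,h2] :=
    ⟨_,_,_,_, Matrix.eta_fin_two _⟩
  rw [hjje] at hjjI e1
  have hL : tmat a b c x y * wmat F = !![-(c*y), x; -(x - b*y), -(a*y)] := by
    rw [tmat, wmat, Matrix.mul_fin_two]; apply mat2_eq <;> ring
  have hR : (!![1,0;u₀,1] : Matrix (Fin 2) (Fin 2) F) * !![e,f;g2,h2]
      = !![e, f; u₀*e + g2, u₀*f + h2] := by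
    rw [Matrix.mul_fin_two]; apply mat2_eq <;> ring
  rw [hL, hR] at e1
  have h00 : -(c*y) = e := by simpa using congrFun (congrFun e1 0) 0
  have h01 : x = f := by simpa using congrFun (congrFun e1 0) 1
  have h10 : -(x - b*y) = u₀*e + g2 := by simpa using congrFun (congrFun e1 1) 0
  have hvy : v y ≤ ev 0 := by
    have hcy : v (c*y) ≤ ev 0 := by
      have hne : v (c*y) = v e := by rw [← h00, Valuation.map_neg]
      rw [hne]; exact hjjI.1.1 0 0
    have : v (c*y) = v y := by
      rw [Valuation.map_mul, hc, show (ev 0 : Zm0) = 1 from rfl, one_mul]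
    rwa [this] at hcy
  have hvx : v x ≤ ev 0 := by rw [h01]; exact hjjI.1.1 0 1
  have hε : v (x - (b + c*u₀)*y) ≤ ev 1 := by
    have hg2v : v g2 ≤ ev 1 := hjjI.2
    have : x - (b + c*u₀)*y = -g2 := by linear_combination -h10 + u₀ * h00
    rw [this, Valuation.map_neg]; exact hg2v
  have hdetjj : v (e*h2 - f*g2) = ev 0 := by
    have := hjjI.1.2; rwa [Matrix.det_fin_two_of] at this
  have h6 := congrArg Matrix.det e1
  rw [Matrix.det_fin_two_of, Matrix.det_fin_two_of] at h6
  have hNdet : x^2 - b*x*y + a*c*y^2 = e*h2 - f*g2 := by linear_combination h6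
  have hvN : v (x^2 - b*x*y + a*c*y^2) = ev 0 := by rw [hNdet]; exact hdetjj
  have hident : x^2 - b*x*y + a*c*y^2
      = c*(c*u₀^2 + b*u₀ + a)*y^2 + (x - (b + c*u₀)*y) * ((b + 2*(c*u₀))*y + (x - (b + c*u₀)*y)) := by
    ring
  have hvNle : v (x^2 - b*x*y + a*c*y^2) ≤ ev 1 := by
    rw [hident]
    refine val_add_le ?_ ?_
    · have : v (c*(c*u₀^2 + b*u₀ + a)*y^2) ≤ ev (0 + 1 + 0) :=
        val_mul_le (val_mul_le (le_of_eq hc) hram) (val_int_sq hvy)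
      simpa using this
    · have hint : v ((b + 2*(c*u₀))*y + (x - (b + c*u₀)*y)) ≤ ev 0 := by
        refine val_add_le ?_ (val_le_weaken hε (by norm_num))
        refine val_int_mul (val_add_le hbo ?_) hvy
        have h2le : v (2 : F) ≤ ev 0 := by
          have : (2 : F) = 1 + 1 := by norm_num
          rw [this]; exact val_add_le (le_of_eq val_one) (le_of_eq val_one)
        exact val_int_mul h2le (val_int_mul (le_of_eq hc) hu₀)
      have : v ((x - (b + c*u₀)*y) * ((b + 2*(c*u₀))*y + (x - (b + c*u₀)*y))) ≤ ev (1 + 0) :=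
        val_mul_le hε hint
      simpa using this
  rw [hvN, ev_le_ev] at hvNle
  omega

end St8

namespace St8
variable {v : Valuation F Zm0}

/-- Part (1), equality -/
lemma part_one_eq {a b c ϖ : F} (hϖ : v ϖ = ev 1) (hc : v c = ev 0)
    (hao : v a ≤ ev 0) (hbo : v b ≤ ev 0) (r : ℕ) (hr : 1 ≤ r) :
    TSet a b c * ({!![ϖ ^ r, 0; 0, 1]} : Set (Matrix (Fin 2) (Fin 2) F)) * GL2O v
      = (TSet a b c * ({!![ϖ ^ r, 0; 0, 1]} : Set (Matrix (Fin 2) (Fin 2) F)) * Iwahori v)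
        ∪ (TSet a b c * ({!![ϖ ^ r, 0; 0, 1] * wmat F} : Set (Matrix (Fin 2) (Fin 2) F))
            * Iwahori v) := by
  have hc0 : c ≠ 0 := unit_ne_zero hc
  have hϖ0 : ϖ ≠ 0 := by
    intro h; rw [h, Valuation.map_zero] at hϖ; exact ev_ne_zero 1 hϖ.symm
  have hP0 : ϖ^r ≠ 0 := pow_ne_zero _ hϖ0
  have hPle : v (ϖ^r) ≤ ev 0 := by
    rw [val_pow hϖ]; exact ev_le_ev.mpr (by exact_mod_cast Nat.zero_le r)
  have hP1 : v (ϖ^r) ≤ ev 1 := by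
    rw [val_pow hϖ]; exact ev_le_ev.mpr (by exact_mod_cast hr)
  apply Set.Subset.antisymm
  · intro g hg
    obtain ⟨t1, ht1, y, hy, k, hk, heq⟩ := mem_mul3.mp hg
    rw [Set.mem_singleton_iff] at hy; subst hy
    by_cases h10 : v (k 1 0) ≤ ev 1
    · exact Set.mem_union_left _ (mem_mul3.mpr ⟨t1, ht1, _, rfl, k, ⟨hk, h10⟩, heq⟩)
    · have hγ : v (k 1 0) = ev 0 := val_gap (hk.1 1 0) h10
      obtain ⟨α, β, γ, δ, hke⟩ : ∃ α β γ δ, k = !![α,β;γ,δ] := ⟨_,_,_,_, Matrix.eta_fin_two k⟩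
      subst hke
      have hγ' : v γ = ev 0 := hγ
      have hαi : v α ≤ ev 0 := hk.1 0 0
      have hβ : v β ≤ ev 0 := hk.1 0 1
      have hδ : v δ ≤ ev 0 := hk.1 1 1
      have hdk : v (α*δ - β*γ) = ev 0 := by
        have := hk.2; rwa [Matrix.det_fin_two_of] at this
      have hinner : v (c*γ^2 + ϖ^r*(a*ϖ^r*α^2 + b*α*γ)) = ev 0 := by
        have hx0 : v (c*γ^2) = ev 0 :=
          val_unit_mul hc (by rw [pow_two]; exact val_unit_mul hγ' hγ')
        have hlt : v (ϖ^r*(a*ϖ^r*α^2 + b*α*γ)) < v (c*γ^2) := by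
          rw [hx0]
          refine lt_of_le_of_lt ?_ (ev_lt_ev.mpr (by norm_num : (0:ℤ) < 1))
          have : v (ϖ^r*(a*ϖ^r*α^2 + b*α*γ)) ≤ ev (1 + 0) :=
            val_mul_le hP1 (val_add_le
              (val_int_mul (val_int_mul hao hPle) (val_int_sq hαi))
              (val_int_mul (val_int_mul hbo hαi) (le_of_eq hγ')))
          simpa using this
        rw [val_add_eq_left hlt]
        exact hx0
      have hNu : v (c*(c*γ^2 + ϖ^r*(a*ϖ^r*α^2 + b*α*γ))) = ev 0 := val_unit_mul hc hinner
      have hN0 : c*(c*γ^2 + ϖ^r*(a*ϖ^r*α^2 + b*α*γ)) ≠ 0 := unit_ne_zero hNu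
      have hnorm : (c*γ + b*(ϖ^r)*α)^2 - b*(c*γ + b*(ϖ^r)*α)*((ϖ^r)*α) + a*c*((ϖ^r)*α)^2
          = c*(c*γ^2 + ϖ^r*(a*ϖ^r*α^2 + b*α*γ)) := by ring
      have hprod : tmat a b c (c*γ + b*(ϖ^r)*α) ((ϖ^r)*α) * (!![ϖ ^ r, 0; 0, 1] * wmat F) *
          !![-(1/c), (-(a*(ϖ^r)^2*α*β) - (c*γ + b*(ϖ^r)*α)*δ)/(c*(c*γ^2 + ϖ^r*(a*ϖ^r*α^2 + b*α*γ)));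
             0, (-(c*(α*δ - β*γ)))/(c*(c*γ^2 + ϖ^r*(a*ϖ^r*α^2 + b*α*γ)))]
          = !![ϖ ^ r, 0; 0, 1] * !![α,β;γ,δ] := by
        generalize hD : c*(c*γ^2 + ϖ^r*(a*ϖ^r*α^2 + b*α*γ)) = D at hN0 ⊢
        rw [tmat, wmat]
        simp only [Matrix.mul_fin_two]
        apply mat2_eq <;> (field_simp; try (subst hD; ring))
      refine Set.mem_union_right _ (mem_mul3.mpr ⟨t1 * tmat a b c (c*γ + b*(ϖ^r)*α) ((ϖ^r)*α),
        TSet_mul ht1 ⟨_, _, by rw [hnorm]; exact hN0, rfl⟩, _, rfl,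
        !![-(1/c), (-(a*(ϖ^r)^2*α*β) - (c*γ + b*(ϖ^r)*α)*δ)/(c*(c*γ^2 + ϖ^r*(a*ϖ^r*α^2 + b*α*γ)));
           0, (-(c*(α*δ - β*γ)))/(c*(c*γ^2 + ϖ^r*(a*ϖ^r*α^2 + b*α*γ)))], ⟨⟨?_, ?_⟩, ?_⟩, ?_⟩)
      · refine int_entries ?_ ?_ val_zero_le ?_
        · rw [Valuation.map_neg, one_div]; exact le_of_eq (val_inv hc)
        · refine val_div_le (val_sub_le ?_ ?_) hNu
          · rw [Valuation.map_neg]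
            exact val_int_mul (val_int_mul (val_int_mul hao (val_int_sq hPle)) hαi) hβ
          · exact val_int_mul (val_add_le (val_int_mul (le_of_eq hc) (le_of_eq hγ'))
              (val_int_mul (val_int_mul hbo hPle) hαi)) hδ
        · rw [neg_div, Valuation.map_neg]
          exact val_div_le (le_of_eq (val_unit_mul hc hdk)) hNu
      · have hdi : (!![-(1/c), (-(a*(ϖ^r)^2*α*β) - (c*γ + b*(ϖ^r)*α)*δ)/(c*(c*γ^2 + ϖ^r*(a*ϖ^r*α^2 + b*α*γ)));
             0, (-(c*(α*δ - β*γ)))/(c*(c*γ^2 + ϖ^r*(a*ϖ^r*α^2 + b*α*γ)))] : Matrix (Fin 2) (Fin 2) F).det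
            = (α*δ - β*γ)/(c*(c*γ^2 + ϖ^r*(a*ϖ^r*α^2 + b*α*γ))) := by
          generalize hD : c*(c*γ^2 + ϖ^r*(a*ϖ^r*α^2 + b*α*γ)) = D at hN0 ⊢
          rw [Matrix.det_fin_two_of]
          field_simp
          ring
        rw [hdi]
        exact val_div_unit hdk hNu
      · exact val_zero_le
      · simp only [mul_assoc] at hprod heq ⊢
        rw [hprod]; exact heq
  · apply Set.union_subset
    · intro g hg
      obtain ⟨t1, ht1, y, hy, i, hi, heq⟩ := mem_mul3.mp hg
      rw [Set.mem_singleton_iff] at hy; subst hy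
      exact mem_mul3.mpr ⟨t1, ht1, _, rfl, i, hi.1, heq⟩
    · intro g hg
      obtain ⟨t1, ht1, y, hy, i, hi, heq⟩ := mem_mul3.mp hg
      rw [Set.mem_singleton_iff] at hy; subst hy
      refine mem_mul3.mpr ⟨t1, ht1, _, rfl, wmat F * i, GL2O_mul w_mem_GL2O hi.1, ?_⟩
      simp only [mul_assoc] at heq ⊢
      exact heq

/-- Part (1), disjointness -/
lemma part_one_disj {a b c ϖ : F} (hϖ : v ϖ = ev 1) (hc : v c = ev 0)
    (hao : v a ≤ ev 0) (hbo : v b ≤ ev 0) (r : ℕ) (hr : 1 ≤ r) :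
    (TSet a b c * ({!![ϖ ^ r, 0; 0, 1]} : Set (Matrix (Fin 2) (Fin 2) F)) * Iwahori v)
      ∩ (TSet a b c * ({!![ϖ ^ r, 0; 0, 1] * wmat F} : Set (Matrix (Fin 2) (Fin 2) F))
          * Iwahori v) = ∅ := by
  have hϖ0 : ϖ ≠ 0 := by
    intro h; rw [h, Valuation.map_zero] at hϖ; exact ev_ne_zero 1 hϖ.symm
  have hP0 : ϖ^r ≠ 0 := pow_ne_zero _ hϖ0
  rw [Set.eq_empty_iff_forall_notMem]
  rintro g ⟨hg1, hg2⟩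
  obtain ⟨t1, ht1, y1, hy1, i1, hi1, heq1⟩ := mem_mul3.mp hg1
  obtain ⟨t2, ht2, y2, hy2, i2, hi2, heq2⟩ := mem_mul3.mp hg2
  rw [Set.mem_singleton_iff] at hy1 hy2; subst hy1; subst hy2
  obtain ⟨t2i, ht2i, ht2l, _⟩ := TSet_inv ht2
  obtain ⟨j1, hj1, hij1, _⟩ := Iwahori_inv hi1
  obtain ⟨x, y, hN0, hxy⟩ := TSet_mul ht2i ht1
  have e1 : t2i * (t1 * !![ϖ ^ r, 0; 0, 1] * i1) * j1
      = t2i * (t2 * (!![ϖ ^ r, 0; 0, 1] * wmat F) * i2) * j1 := by rw [heq1, heq2]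
  simp only [mul_assoc] at e1
  rw [hij1, mul_one] at e1
  rw [← mul_assoc t2i t2, ht2l, one_mul] at e1
  rw [← mul_assoc t2i t1, hxy] at e1
  have hjjI : i2 * j1 ∈ Iwahori v := Iwahori_mul hi2 hj1
  obtain ⟨e, f, g2, h2, hjje⟩ : ∃ e f g2 h2, i2 * j1 = !![e,f;g2,h2] :=
    ⟨_,_,_,_, Matrix.eta_fin_two _⟩
  rw [hjje] at hjjI e1
  have hL : tmat a b c x y * !![ϖ ^ r, 0; 0, 1] = !![x*ϖ^r, c*y; -(a*y)*ϖ^r, x - b*y] := by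
    rw [tmat, Matrix.mul_fin_two]; apply mat2_eq <;> ring
  have hR : (!![ϖ ^ r, 0; 0, 1] : Matrix (Fin 2) (Fin 2) F) * (wmat F * !![e,f;g2,h2])
      = !![ϖ^r*g2, ϖ^r*h2; -e, -f] := by
    rw [wmat]; simp only [Matrix.mul_fin_two]; apply mat2_eq <;> ring
  rw [hL, hR] at e1
  have h00 : x*ϖ^r = ϖ^r*g2 := by simpa using congrFun (congrFun e1 0) 0
  have h01 : c*y = ϖ^r*h2 := by simpa using congrFun (congrFun e1 0) 1
  have hvx : v x ≤ ev 1 := by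
    have hxg : x = g2 := mul_right_cancel₀ hP0 (h00.trans (mul_comm _ _))
    rw [hxg]; exact hjjI.2
  have hvy : v y ≤ ev 1 := by
    have hcy : v (c*y) ≤ ev 1 := by
      rw [h01]
      have h5 : v (ϖ^r*h2) ≤ ev (↑r : ℤ) := by
        have : v (ϖ^r*h2) ≤ ev (↑r + 0) := val_mul_le (le_of_eq (val_pow hϖ r)) (hjjI.1.1 1 1)
        simpa using this
      exact val_le_weaken h5 (by exact_mod_cast hr)
    have hne : v (c*y) = v y := by
      rw [Valuation.map_mul, hc, show (ev 0 : Zm0) = 1 from rfl, one_mul]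
    rwa [hne] at hcy
  have hdetjj : v (e*h2 - f*g2) = ev 0 := by
    have := hjjI.1.2; rwa [Matrix.det_fin_two_of] at this
  have h6 := congrArg Matrix.det e1
  rw [Matrix.det_fin_two_of, Matrix.det_fin_two_of] at h6
  have h7 : ϖ^r * (x^2 - b*x*y + a*c*y^2) = ϖ^r * (e*h2 - f*g2) := by linear_combination h6
  have hNdet : x^2 - b*x*y + a*c*y^2 = e*h2 - f*g2 := mul_left_cancel₀ hP0 h7
  have hvN : v (x^2 - b*x*y + a*c*y^2) = ev 0 := by rw [hNdet]; exact hdetjj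
  have hsplit : x^2 - b*x*y + a*c*y^2 = x*x + (-(b*(x*y)) + a*(c*(y*y))) := by ring
  have hvNle : v (x^2 - b*x*y + a*c*y^2) ≤ ev 1 := by
    rw [hsplit]
    refine val_add_le (val_le_weaken ?_ (by norm_num : (1:ℤ) ≤ 1 + 1))
      (val_add_le ?_ ?_)
    · exact val_mul_le hvx hvx
    · rw [Valuation.map_neg]
      refine val_le_weaken (val_mul_le hbo (val_mul_le hvx hvy)) (by norm_num : (1:ℤ) ≤ 0 + (1+1))
    · refine val_le_weaken (val_mul_le hao (val_mul_le (le_of_eq hc) (val_mul_le hvy hvy)))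
        (by norm_num : (1:ℤ) ≤ 0 + (0 + (1+1)))
  rw [hvN, ev_le_ev] at hvNle
  omega

end St8

open St8 in
/-- double coset decompositions of T(F)·diag(ϖ^r,1)·GL₂(𝔬) into T(F)\GL₂(F)/I
double cosets.  Part (2) corresponds to the inert unramified case (the residual quadratic has
no root), part (3) to the ramified case (the residual quadratic has the unique root u₀). -/
theorem stmt8
    (v : Valuation F Zm0) (ϖ : F) (hϖ : v ϖ = ev 1)
    (a b c : F)
    (hao : v a ≤ ev 0) (hbo : v b ≤ ev 0) (hc : v c = ev 0)
    (hd0 : b ^ 2 - 4 * (a * c) ≠ 0)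
    (hnonsq : ∀ s : F, s ^ 2 ≠ b ^ 2 - 4 * (a * c)) :
    -- (1)
    (∀ r : ℕ, 1 ≤ r →
      TSet a b c * ({!![ϖ ^ r, 0; 0, 1]} : Set (Matrix (Fin 2) (Fin 2) F)) * GL2O v
        = (TSet a b c * ({!![ϖ ^ r, 0; 0, 1]} : Set (Matrix (Fin 2) (Fin 2) F)) * Iwahori v)
          ∪ (TSet a b c * ({!![ϖ ^ r, 0; 0, 1] * wmat F} : Set (Matrix (Fin 2) (Fin 2) F))
              * Iwahori v)
      ∧ (TSet a b c * ({!![ϖ ^ r, 0; 0, 1]} : Set (Matrix (Fin 2) (Fin 2) F)) * Iwahori v)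
          ∩ (TSet a b c * ({!![ϖ ^ r, 0; 0, 1] * wmat F} : Set (Matrix (Fin 2) (Fin 2) F))
              * Iwahori v) = ∅)
    ∧
    -- (2)
    ((∀ u : F, v u ≤ ev 0 → v (a + b * u + c * u ^ 2) = ev 0) →
      TSet a b c * GL2O v = TSet a b c * Iwahori v
      ∧ TSet a b c * GL2O v
          = TSet a b c * ({wmat F} : Set (Matrix (Fin 2) (Fin 2) F)) * Iwahori v)
    ∧
    -- (3)
    (∀ u₀ : F, v u₀ ≤ ev 0 → v (c * u₀ ^ 2 + b * u₀ + a) ≤ ev 1 →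
      (∀ u : F, v u ≤ ev 0 → ¬ v (u - u₀) ≤ ev 1 → v (a + b * u + c * u ^ 2) = ev 0) →
      TSet a b c * GL2O v
        = (TSet a b c * ({wmat F} : Set (Matrix (Fin 2) (Fin 2) F)) * Iwahori v)
          ∪ (TSet a b c * ({!![1, 0; u₀, 1]} : Set (Matrix (Fin 2) (Fin 2) F)) * Iwahori v)
      ∧ (TSet a b c * ({wmat F} : Set (Matrix (Fin 2) (Fin 2) F)) * Iwahori v)
          ∩ (TSet a b c * ({!![1, 0; u₀, 1]} : Set (Matrix (Fin 2) (Fin 2) F)) * Iwahori v)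
          = ∅) := by
  refine ⟨fun r hr => ⟨part_one_eq hϖ hc hao hbo r hr, part_one_disj hϖ hc hao hbo r hr⟩,
    fun hQ => part_two hc hao hbo hQ,
    fun u₀ h1 h2 h3 => ⟨part_three_eq hc hao hbo h1 h3, part_three_disj hc hao hbo h1 h2⟩⟩
end
end
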